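/- arXiv:1112.4536 — 4 statements merged into one kernel-verified Lean document; each statement's English description precedes it below -/
import Mathlib

section
/- Let G = (C, S, E) be a bipartite graph with E ⊆ C × S. The following are equivalent: (1) for all c, c' ∈ C, N_G(c) ∩ N_G(c') ∈ {∅, N_G(c), N_G(c')}; (2) there do not exist s, s', s'' ∈ S and c, c' ∈ C with (c,s), (c,s'), (c',s'), (c',s'') ∈ E and (c,s''), (c',s) ∉ E; (3) there exists a perfect phylogeny for G, i.e., a phylogeny T for S such that N_G(c) ∈ T for every c ∈ C. -/
def IsPhylo {α : Type*} (S : Set α) (T : Set (Set α)) : Prop :=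
  (∀ X ∈ T, X ⊆ S) ∧ (∅ : Set α) ∈ T ∧ S ∈ T ∧ (∀ s ∈ S, ({s} : Set α) ∈ T) ∧
    ∀ X ∈ T, ∀ Y ∈ T, X ∩ Y = ∅ ∨ X ∩ Y = X ∨ X ∩ Y = Y

/-- Neighborhood of a character `c` in the bipartite graph with edge set `E`. -/
def Nbr {χ σ : Type*} (E : Set (χ × σ)) (c : χ) : Set σ := {s | (c, s) ∈ E}

/-- Condition (1): neighborhoods form a laminar family. -/
def MFree {χ σ : Type*} (E : Set (χ × σ)) : Prop :=
  ∀ c c' : χ, Nbr E c ∩ Nbr E c' = ∅ ∨ Nbr E c ∩ Nbr E c' = Nbr E c ∨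
    Nbr E c ∩ Nbr E c' = Nbr E c'

/-- The bipartite graph contains an induced `M`. -/
def HasM {χ σ : Type*} (E : Set (χ × σ)) : Prop :=
  ∃ (c c' : χ) (s s' s'' : σ), (c, s) ∈ E ∧ (c, s') ∈ E ∧ (c', s') ∈ E ∧ (c', s'') ∈ E ∧
    (c, s'') ∉ E ∧ (c', s) ∉ E

lemma mfree_iff_not_hasM {χ σ : Type*} (E : Set (χ × σ)) : MFree E ↔ ¬ HasM E := by
  constructor
  · rintro h ⟨c, c', s, s', s'', h1, h2, h3, h4, h5, h6⟩
    rcases h c c' with h0 | h0 | h0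
    · have : s' ∈ Nbr E c ∩ Nbr E c' := ⟨h2, h3⟩
      rw [h0] at this; exact this
    · have : s ∈ Nbr E c ∩ Nbr E c' := h0.symm ▸ h1
      exact h6 this.2
    · have : s'' ∈ Nbr E c ∩ Nbr E c' := h0.symm ▸ h4
      exact h5 this.1
  · intro h c c'
    by_contra hc
    push_neg at hc
    obtain ⟨h1, h2, h3⟩ := hc
    have hne : (Nbr E c ∩ Nbr E c').Nonempty := h1
    obtain ⟨s', hs'1, hs'2⟩ := hne
    have hs : ∃ s, s ∈ Nbr E c ∧ s ∉ Nbr E c' := by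
      by_contra hn
      push_neg at hn
      exact h2 (Set.ext fun x => ⟨fun hx => hx.1, fun hx => ⟨hx, hn x hx⟩⟩)
    have hs'' : ∃ s, s ∈ Nbr E c' ∧ s ∉ Nbr E c := by
      by_contra hn
      push_neg at hn
      exact h3 (Set.ext fun x => ⟨fun hx => hx.2, fun hx => ⟨hn x hx, hx⟩⟩)
    obtain ⟨s, hs1, hs2⟩ := hs
    obtain ⟨s'', ht1, ht2⟩ := hs''
    exact h ⟨c, c', s, s', s'', hs1, hs'1, hs'2, ht1, ht2, hs2⟩

theorem stmt_2 {χ σ : Type*} [Fintype χ] [Fintype σ] (E : Set (χ × σ)) :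
    (MFree E ↔ ¬ HasM E) ∧
    (MFree E ↔ ∃ T : Set (Set σ), IsPhylo (Set.univ : Set σ) T ∧ ∀ c : χ, Nbr E c ∈ T) := by
  refine ⟨mfree_iff_not_hasM E, ?_, ?_⟩
  · intro h
    refine ⟨{X | X = ∅ ∨ X = Set.univ ∨ (∃ s, X = {s}) ∨ ∃ c, X = Nbr E c}, ⟨?_, ?_, ?_, ?_, ?_⟩, ?_⟩
    · intro X _; exact Set.subset_univ X
    · exact Or.inl rfl
    · exact Or.inr (Or.inl rfl)
    · intro s _; exact Or.inr (Or.inr (Or.inl ⟨s, rfl⟩))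
    · rintro X hX Y hY
      rcases hX with rfl | rfl | ⟨s, rfl⟩ | ⟨c, rfl⟩
      · left; simp
      · rcases hY with rfl | rfl | ⟨s, rfl⟩ | ⟨c, rfl⟩ <;> simp
      · by_cases hs : s ∈ Y
        · right; left; exact Set.inter_eq_left.2 (Set.singleton_subset_iff.2 hs)
        · left; exact Set.eq_empty_of_forall_notMem fun x ⟨hx1, hx2⟩ => hs (hx1 ▸ hx2)
      · rcases hY with rfl | rfl | ⟨s, rfl⟩ | ⟨c', rfl⟩
        · left; simp
        · right; left; simp
        · by_cases hs : s ∈ Nbr E c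
          · right; right; exact Set.inter_eq_right.2 (Set.singleton_subset_iff.2 hs)
          · left; exact Set.eq_empty_of_forall_notMem fun x ⟨hx1, hx2⟩ => hs (hx2 ▸ hx1)
        · exact h c c'
    · intro c; exact Or.inr (Or.inr (Or.inr ⟨c, rfl⟩))
  · rintro ⟨T, ⟨_, _, _, _, hlam⟩, hmem⟩ c c'
    exact hlam _ (hmem c) _ (hmem c')
end

section
/- Let G = (C, S, E) be a bipartite graph satisfying: for all c, c' ∈ C, N_G(c) ∩ N_G(c') ∈ {∅, N_G(c), N_G(c')}. Define T_G = {∅, S} ∪ {N_G(c) : c ∈ C} ∪ {{s} : s ∈ S}. Then T_G is a perfect phylogeny for G. -/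
/-- The family `T_G = {∅, S} ∪ {N_G(c) : c ∈ C} ∪ {{s} : s ∈ S}` (here `S` is the whole type). -/
def TG {χ σ : Type*} (E : Set (χ × σ)) : Set (Set σ) :=
  {∅, Set.univ} ∪ Set.range (Nbr E) ∪ {X | ∃ s : σ, X = {s}}

lemma singleton_lam {α : Type*} (s : α) (Y : Set α) :
    ({s} : Set α) ∩ Y = ∅ ∨ ({s} : Set α) ∩ Y = {s} ∨ ({s} : Set α) ∩ Y = Y := by
  by_cases hs : s ∈ Y
  · right; left; ext x; simp; intro hx; subst hx; exact hs
  · left; ext x; simp; intro hx; subst hx; exact hs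

theorem stmt_3 {χ σ : Type*} [Fintype χ] [Fintype σ] (E : Set (χ × σ))
    (h : MFree E) :
    IsPhylo (Set.univ : Set σ) (TG E) ∧ ∀ c : χ, Nbr E c ∈ TG E := by
  constructor
  · refine ⟨fun X _ => Set.subset_univ X, Or.inl (Or.inl (Or.inl rfl)),
      Or.inl (Or.inl (Or.inr rfl)), fun s _ => Or.inr ⟨s, rfl⟩, ?_⟩
    rintro X hX Y hY
    rcases hX with ((rfl | rfl) | ⟨c, rfl⟩) | ⟨s, rfl⟩
    · left; simp
    · right; right; simp
    · rcases hY with ((rfl | rfl) | ⟨c', rfl⟩) | ⟨s, rfl⟩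
      · left; simp
      · right; left; simp
      · exact h c c'
      · rcases singleton_lam s (Nbr E c) with h1 | h1 | h1
        · left; rw [Set.inter_comm]; exact h1
        · right; right; rw [Set.inter_comm]; exact h1
        · right; left; rw [Set.inter_comm]; exact h1
    · exact singleton_lam s Y
  · exact fun c => Or.inl (Or.inr ⟨c, rfl⟩)
end

section
/- Let G = (C, S, E) be a bipartite graph that contains an 'M' as induced subgraph, i.e., there exist s, s', s'' ∈ S and c, c' ∈ C with (c,s), (c,s'), (c',s'), (c',s'') ∈ E and (c,s''), (c',s) ∉ E. Then there is no perfect phylogeny for G. -/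
theorem stmt_6 {χ σ : Type*} [Fintype χ] [Fintype σ] (E : Set (χ × σ))
    (hM : ∃ (c c' : χ) (s s' s'' : σ), (c, s) ∈ E ∧ (c, s') ∈ E ∧ (c', s') ∈ E ∧
      (c', s'') ∈ E ∧ (c, s'') ∉ E ∧ (c', s) ∉ E) :
    ¬ ∃ T : Set (Set σ), IsPhylo (Set.univ : Set σ) T ∧ ∀ c : χ, Nbr E c ∈ T := by
  rintro ⟨T, ⟨-, -, -, -, hlam⟩, hN⟩
  obtain ⟨c, c', s, s', s'', h1, h2, h3, h4, h5, h6⟩ := hM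
  rcases hlam _ (hN c) _ (hN c') with h | h | h
  · have : s' ∈ Nbr E c ∩ Nbr E c' := ⟨h2, h3⟩
    rw [h] at this; exact this
  · have : s ∈ Nbr E c ∩ Nbr E c' := by rw [h]; exact h1
    exact h6 this.2
  · have : s'' ∈ Nbr E c ∩ Nbr E c' := by rw [h]; exact h4
    exact h5 this.1
end

section
/- Let α, β be positive extended integers with γ = min{α, β}, and let H = (C, S, F) be constructed from an RTI instance (S, R) as follows: R = {⟨x_c y_c | z_c⟩ : c ∈ C}, F(c,s) = β if s ∈ {x_c, y_c}, F(c,s) = −α if s = z_c, F(c,s) = 0 otherwise. If there exists a phylogeny T for S such that at most k resolved triplets of R do not fit T, then there exists an M-free edition G of H with Δ(G, H) ≤ γk. -/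
open scoped Classical

/-- `⟨xy|z⟩` fits `T`: some cluster `X` of `T` satisfies `X ∩ {x,y,z} = {x,y}`. -/
def Fits {α : Type*} (T : Set (Set α)) (x y z : α) : Prop :=
  ∃ X ∈ T, X ∩ {x, y, z} = ({x, y} : Set α)

noncomputable def Delta {χ σ : Type*} [Fintype χ] [Fintype σ]
    (E : Finset (χ × σ)) (F : χ × σ → EReal) : EReal :=
  ∑ e : χ × σ, if e ∈ E then max 0 (-F e) else max 0 (F e)

lemma nsmul_eq_mul_ereal (γ : EReal) (hγ : 0 ≤ γ) : ∀ n : ℕ, n • γ = γ * ((n : ℝ) : EReal)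
  | 0 => by simp
  | (n+1) => by
    rw [succ_nsmul, nsmul_eq_mul_ereal γ hγ n]
    push_cast
    rw [mul_comm γ, mul_comm γ,
      EReal.right_distrib_of_nonneg (by exact_mod_cast EReal.coe_nonneg.2 (Nat.cast_nonneg n))
        zero_le_one, one_mul]

theorem stmt_11 {σ C : Type*} [Fintype σ] [Fintype C]
    (x y z : C → σ) (hd : ∀ c, x c ≠ y c ∧ x c ≠ z c ∧ y c ≠ z c)
    (α β : EReal) (hα : 0 < α) (hβ : 0 < β)
    (hαi : α = ⊤ ∨ ∃ n : ℤ, α = ((n : ℝ) : EReal))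
    (hβi : β = ⊤ ∨ ∃ n : ℤ, β = ((n : ℝ) : EReal))
    (F : C × σ → EReal)
    (hF : ∀ c s, F (c, s) = if s = x c ∨ s = y c then β else if s = z c then -α else 0)
    (k : ℕ)
    (hT : ∃ T : Set (Set σ), IsPhylo (Set.univ : Set σ) T ∧
      (Finset.univ.filter fun c : C => ¬ Fits T (x c) (y c) (z c)).card ≤ k) :
    ∃ E : Finset (C × σ), MFree (↑E : Set (C × σ)) ∧
      Delta E F ≤ min α β * ((k : ℝ) : EReal) := by
  obtain ⟨T, hTp, hcard⟩ := hT
  set γ := min α β with hγdef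
  have hγ : 0 ≤ γ := le_min hα.le hβ.le
  -- choose the neighborhood for each c
  have hXc : ∀ c : C, ∃ X : Set σ, X ∈ T ∧
      ((Fits T (x c) (y c) (z c)) → X ∩ {x c, y c, z c} = {x c, y c}) ∧
      ((¬ Fits T (x c) (y c) (z c)) → (α ≤ β ∧ X = Set.univ) ∨ (¬ α ≤ β ∧ X = {x c})) := by
    intro c
    by_cases h : Fits T (x c) (y c) (z c)
    · obtain ⟨X, hX, hX2⟩ := h
      exact ⟨X, hX, fun _ => hX2, fun h' => absurd ⟨X, hX, hX2⟩ h'⟩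
    · by_cases hab : α ≤ β
      · exact ⟨Set.univ, hTp.2.2.1, fun h' => absurd h' h, fun _ => Or.inl ⟨hab, rfl⟩⟩
      · exact ⟨{x c}, hTp.2.2.2.1 _ trivial, fun h' => absurd h' h,
          fun _ => Or.inr ⟨hab, rfl⟩⟩
  choose X hXT hXfit hXnot using hXc
  refine ⟨Finset.univ.filter fun e : C × σ => e.2 ∈ X e.1, ?_, ?_⟩
  · -- MFree
    have hN : ∀ c, Nbr (↑(Finset.univ.filter fun e : C × σ => e.2 ∈ X e.1) : Set (C × σ)) c
        = X c := by
      intro c; ext s; simp [Nbr]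
    intro c c'
    rw [hN, hN]
    exact hTp.2.2.2.2 _ (hXT c) _ (hXT c')
  · -- Delta bound
    have hβn : max (0 : EReal) (-β) = 0 := max_eq_left (by rw [EReal.neg_le, neg_zero]; exact hβ.le)
    have hαn : max (0 : EReal) (-α) = 0 := max_eq_left (by rw [EReal.neg_le, neg_zero]; exact hα.le)
    rw [Delta, Fintype.sum_prod_type]
    have key : ∀ c : C,
        (∑ s : σ, if (c, s) ∈ Finset.univ.filter (fun e : C × σ => e.2 ∈ X e.1)
           then max 0 (-F (c, s)) else max 0 (F (c, s)))
        = if Fits T (x c) (y c) (z c) then 0 else γ := by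
      intro c
      obtain ⟨hxy, hxz, hyz⟩ := hd c
      by_cases h : Fits T (x c) (y c) (z c)
      · rw [if_pos h]
        apply Finset.sum_eq_zero
        intro s _
        have hfit := hXfit c h
        simp only [Finset.mem_filter, Finset.mem_univ, true_and, hF]
        by_cases hs : s ∈ X c
        · rw [if_pos hs]
          by_cases h1 : s = x c ∨ s = y c
          · rw [if_pos h1]; exact hβn
          · have h2 : s ≠ z c := by
              intro hz
              have : s ∈ X c ∩ {x c, y c, z c} := ⟨hs, by simp [hz]⟩
              rw [hfit] at this
              rcases this with h | h <;> simp_all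
            rw [if_neg h1, if_neg h2]; simp
        · rw [if_neg hs]
          have hxin : x c ∈ X c := by
            have h' : x c ∈ X c ∩ {x c, y c, z c} := by rw [hfit]; simp
            exact h'.1
          have hyin : y c ∈ X c := by
            have h' : y c ∈ X c ∩ {x c, y c, z c} := by rw [hfit]; simp
            exact h'.1
          have h1 : ¬ (s = x c ∨ s = y c) := by
            rintro (rfl | rfl)
            · exact hs hxin
            · exact hs hyin
          rw [if_neg h1]
          by_cases h2 : s = z c
          · rw [if_pos h2]; exact hαn
          · rw [if_neg h2]; simp
      · rw [if_neg h]
        rcases hXnot c h with ⟨hab, hXu⟩ | ⟨hab, hXs⟩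
        · -- X c = univ, cost α, γ = α
          have hγα : γ = α := min_eq_left hab
          rw [hγα, Finset.sum_eq_single (z c)]
          · simp only [Finset.mem_filter, Finset.mem_univ, true_and, hXu, Set.mem_univ,
              if_true, hF]
            rw [if_neg (by rintro (h' | h') <;> [exact hxz h'.symm; exact hyz h'.symm]),
              neg_neg]
            exact max_eq_right hα.le
          · intro s _ hsz
            simp only [Finset.mem_filter, Finset.mem_univ, true_and, hXu, Set.mem_univ,
              if_true, hF]
            by_cases h1 : s = x c ∨ s = y c
            · rw [if_pos h1]; exact hβn
            · rw [if_neg h1, if_neg hsz]; simp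
          · intro habs; exact absurd (Finset.mem_univ _) habs
        · -- X c = {x c}, cost β, γ = β
          have hγβ : γ = β := min_eq_right (le_of_not_ge hab)
          have hmem : ∀ s : σ, ((c, s) ∈ Finset.univ.filter
              (fun e : C × σ => e.2 ∈ X e.1)) ↔ s = x c := by
            intro s; simp [hXs]
          rw [hγβ, Finset.sum_eq_single (y c)]
          · rw [if_neg (by rw [hmem]; exact fun h' => hxy h'.symm), hF,
              if_pos (Or.inr rfl)]
            exact max_eq_right hβ.le
          · intro s _ hsy
            by_cases hsx : s = x c
            · rw [if_pos ((hmem s).2 hsx), hF, if_pos (Or.inl hsx)]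
              exact hβn
            · rw [if_neg (fun h' => hsx ((hmem s).1 h')), hF,
                if_neg (by rintro (h' | h') <;> [exact hsx h'; exact hsy h'])]
              by_cases h2 : s = z c
              · rw [if_pos h2]; exact hαn
              · rw [if_neg h2]; simp
          · intro habs; exact absurd (Finset.mem_univ _) habs
    calc (∑ c : C, ∑ s : σ, if (c, s) ∈ Finset.univ.filter (fun e : C × σ => e.2 ∈ X e.1)
            then max 0 (-F (c, s)) else max 0 (F (c, s)))
        = ∑ c : C, if Fits T (x c) (y c) (z c) then 0 else γ :=
          Finset.sum_congr rfl fun c _ => key c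
      _ = ∑ c ∈ Finset.univ.filter (fun c : C => ¬ Fits T (x c) (y c) (z c)), γ := by
          rw [Finset.sum_filter]
          refine Finset.sum_congr rfl fun c _ => ?_
          by_cases h : Fits T (x c) (y c) (z c) <;> simp [h]
      _ = (Finset.univ.filter (fun c : C => ¬ Fits T (x c) (y c) (z c))).card • γ :=
          Finset.sum_const γ
      _ = γ * (((Finset.univ.filter (fun c : C => ¬ Fits T (x c) (y c) (z c))).card : ℝ) :
            EReal) := nsmul_eq_mul_ereal γ hγ _
      _ ≤ γ * ((k : ℝ) : EReal) := by
          apply mul_le_mul_of_nonneg_left _ hγ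
          exact_mod_cast hcard
end
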